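/- Let n and e be integers with n ≥ 1 and 0 ≤ e ≤ n−1. Then Σ_{i=0}^{n−1} ((−1)^{n−i−1}/(2n−2i−1)) · (n−e−i)_{2i}/(i!)^2 = (−1)^n · (1/2+n)_{n−e−1} / ( 2 · (1/2−n)_{n−e} ). -/

import Mathlib

open Finset
open scoped fwdDiff

/-- Shifted factorial `(a)_k = a(a+1)···(a+k-1)`. -/
def shifted (a : ℚ) (k : ℕ) : ℚ := ∏ t ∈ Finset.range k, (a + t)
lemma alt_sum_int (M : ℕ) :
    ∑ k ∈ Finset.range (M+2), (-1:ℤ)^(M+1-k) * ((M+1).choose k) * ((M+k).choose M) = 0 := by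
  have h0 : (fwdDiff (1:ℕ))^[M+1] (fun x : ℕ ↦ ((M+x).choose M : ℤ)) 0 = 0 := by
    have hf : (fun x : ℕ ↦ ((M+x).choose M : ℤ))
        = ∑ ij ∈ Finset.HasAntidiagonal.antidiagonal M,
            (M.choose ij.1 : ℤ) • (fun x : ℕ ↦ (x.choose ij.2 : ℤ)) := by
      funext x
      simp only [Finset.sum_apply, Pi.smul_apply, smul_eq_mul]
      rw [Nat.add_choose_eq]
      push_cast
      rfl
    rw [hf, fwdDiff_iter_finset_sum]
    rw [Finset.sum_apply]
    apply Finset.sum_eq_zero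
    intro ij hij
    rw [fwdDiff_iter_const_smul, Pi.smul_apply, fwdDiff_iter_choose_zero]
    have h2 : ij.2 ≤ M := Finset.HasAntidiagonal.antidiagonal.snd_le hij
    rw [if_neg (by omega)]
    simp
  rw [fwdDiff_iter_eq_sum_shift] at h0
  rw [← h0]
  apply Finset.sum_congr rfl
  intro k hk
  simp [mul_assoc]
lemma choose_sum_q (M : ℕ) :
    ∑ k ∈ Finset.range (M+1), (-1:ℚ)^(M-k) * ((M+1).choose k) * ((M+k).choose M)
      = ((2*M+1).choose M : ℚ) := by
  have h := alt_sum_int M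
  rw [Finset.sum_range_succ] at h
  have h2 : ∑ k ∈ Finset.range (M+1), (-1:ℤ)^(M+1-k) * ((M+1).choose k) * ((M+k).choose M)
      = -∑ k ∈ Finset.range (M+1), (-1:ℤ)^(M-k) * ((M+1).choose k) * ((M+k).choose M) := by
    rw [← Finset.sum_neg_distrib]
    apply Finset.sum_congr rfl
    intro k hk
    have hk' : k ≤ M := Nat.lt_succ_iff.mp (Finset.mem_range.mp hk)
    have : M + 1 - k = (M - k) + 1 := by omega
    rw [this, pow_succ]
    ring
  rw [h2] at h
  simp only [Nat.sub_self, pow_zero, one_mul, Nat.choose_self, Nat.cast_one] at h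
  have h3 : ∑ k ∈ Finset.range (M+1), (-1:ℤ)^(M-k) * ((M+1).choose k) * ((M+k).choose M)
      = ((2*M+1).choose M : ℤ) := by
    have h4 : M + (M+1) = 2*M+1 := by omega
    rw [← h4]; linarith
  exact_mod_cast h3

lemma sub3 (M : ℕ) :
    ∑ i ∈ Finset.range (M+1),
        (-1:ℚ)^(M-i) * (Nat.factorial (M+i) : ℚ) * (2*(M:ℚ)+2) /
          ((Nat.factorial i : ℚ)^2 * (Nat.factorial (M+1-i) : ℚ))
      = (Nat.factorial (2*M+2) : ℚ) / (Nat.factorial (M+1) : ℚ)^2 := by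
  have key : ∑ i ∈ Finset.range (M+1),
      (-1:ℚ)^(M-i) * (Nat.factorial (M+i) : ℚ) * (2*(M:ℚ)+2) /
        ((Nat.factorial i : ℚ)^2 * (Nat.factorial (M+1-i) : ℚ))
      = 2 * ∑ k ∈ Finset.range (M+1), (-1:ℚ)^(M-k) * ((M+1).choose k) * ((M+k).choose M) := by
    rw [Finset.mul_sum]
    apply Finset.sum_congr rfl
    intro i hi
    have hi' : i ≤ M := Nat.lt_succ_iff.mp (Finset.mem_range.mp hi)
    rw [Nat.cast_choose ℚ (show i ≤ M+1 by omega), Nat.cast_choose ℚ (show M ≤ M+i by omega)]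
    have e1 : M + i - M = i := by omega
    rw [e1]
    have f1 : (Nat.factorial i : ℚ) ≠ 0 := Nat.cast_ne_zero.mpr (Nat.factorial_ne_zero i)
    have f2 : (Nat.factorial (M+1-i) : ℚ) ≠ 0 := Nat.cast_ne_zero.mpr (Nat.factorial_ne_zero _)
    have f3 : (Nat.factorial M : ℚ) ≠ 0 := Nat.cast_ne_zero.mpr (Nat.factorial_ne_zero M)
    have f4 : (Nat.factorial (M+1) : ℚ) = ((M:ℚ)+1) * Nat.factorial M := by
      rw [Nat.factorial_succ]; push_cast; ring
    rw [f4]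
    field_simp
  rw [key, choose_sum_q]
  have pascal : (2*M+2).choose (M+1) = 2 * ((2*M+1).choose M) := by
    have hs : (2*M+1).choose (M+1) = (2*M+1).choose M := by
      rw [← Nat.choose_symm (by omega : M+1 ≤ 2*M+1)]
      congr 1
      omega
    have h5 : (2*M+2) = (2*M+1) + 1 := by omega
    rw [h5, Nat.choose_succ_succ, hs]
    omega
  have cast2 : ((2*M+2).choose (M+1) : ℚ)
      = (Nat.factorial (2*M+2) : ℚ) / (Nat.factorial (M+1) : ℚ)^2 := by
    rw [Nat.cast_choose ℚ (show M+1 ≤ 2*M+2 by omega)]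
    have h6 : 2*M+2 - (M+1) = M+1 := by omega
    rw [h6]
    ring
  rw [← cast2, pascal]
  push_cast
  ring
lemma fact_ne (a : ℕ) : (Nat.factorial a : ℚ) ≠ 0 :=
  Nat.cast_ne_zero.mpr (Nat.factorial_ne_zero a)

lemma key (M : ℕ) (x : ℚ) (hx : ∀ j : ℕ, x - 2*(j:ℚ) - 1 ≠ 0) :
    ∑ i ∈ Finset.range (M+1),
        (-1:ℚ)^(M-i) * (Nat.factorial (M+i) : ℚ) /
          ((Nat.factorial i : ℚ)^2 * (Nat.factorial (M-i) : ℚ) * (x - 2*(i:ℚ) - 1))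
      = (∏ j ∈ Finset.range M, (x + 2*(j:ℚ) + 1)) /
          (∏ j ∈ Finset.range (M+1), (x - 2*(j:ℚ) - 1)) := by
  induction M with
  | zero => simp [Nat.factorial]
  | succ M IH =>
    rw [Finset.sum_range_succ]
    have step : ∀ i ∈ Finset.range (M+1),
        (-1:ℚ)^(M+1-i) * (Nat.factorial (M+1+i) : ℚ) /
            ((Nat.factorial i : ℚ)^2 * (Nat.factorial (M+1-i) : ℚ) * (x - 2*(i:ℚ) - 1))
        = (x + 2*(M:ℚ)+1)/(x - 2*(M:ℚ)-3) *
            ((-1:ℚ)^(M-i) * (Nat.factorial (M+i) : ℚ) /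
              ((Nat.factorial i : ℚ)^2 * (Nat.factorial (M-i) : ℚ) * (x - 2*(i:ℚ) - 1)))
          - ((-1:ℚ)^(M-i) * (Nat.factorial (M+i) : ℚ) * (2*(M:ℚ)+2) /
              ((Nat.factorial i : ℚ)^2 * (Nat.factorial (M+1-i) : ℚ))) / (x - 2*(M:ℚ) - 3) := by
      intro i hi
      have hi' : i ≤ M := Nat.lt_succ_iff.mp (Finset.mem_range.mp hi)
      obtain ⟨k, rfl⟩ : ∃ k, M = i + k := ⟨M - i, by omega⟩
      rw [show i+k+1-i = k+1 from by omega, show i+k-i = k from by omega,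
          show i+k+1+i = (i+k+i)+1 from by omega, Nat.factorial_succ,
          Nat.factorial_succ k]
      have d1 : x - 2*(i:ℚ) - 1 ≠ 0 := hx i
      have d2 : x - 2*((i:ℚ)+(k:ℚ)) - 3 ≠ 0 := by
        have := hx (i+k+1)
        push_cast at this
        intro h; apply this; linarith
      have d2' : x - 2*(i:ℚ) - 2*(k:ℚ) - 3 ≠ 0 := by intro h; apply d2; linarith
      push_cast
      have e1 : x - (i:ℚ)*2 - 1 ≠ 0 := by intro h; apply d1; linarith
      have e2 : x - ((i:ℚ)+k)*2 - 3 ≠ 0 := by intro h; apply d2; linarith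
      field_simp
      ring
    rw [Finset.sum_congr rfl step, Finset.sum_sub_distrib, ← Finset.mul_sum,
        ← Finset.sum_div, IH, sub3 M]
    have hQ : (∏ j ∈ Finset.range (M+1), (x - 2*(j:ℚ) - 1)) ≠ 0 :=
      Finset.prod_ne_zero_iff.mpr (fun j _ => hx j)
    have d2 : x - 2*((M:ℚ)+1) - 1 ≠ 0 := by
      have := hx (M+1); push_cast at this; exact this
    have d2' : x - 2*(M:ℚ) - 3 ≠ 0 := by intro h; apply d2; linarith
    rw [Finset.prod_range_succ (fun j => x + 2*(j:ℚ) + 1) M,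
        Finset.prod_range_succ (fun j => x - 2*(j:ℚ) - 1) (M+1)]
    rw [show M+1-(M+1) = 0 from by omega, show M+1+(M+1) = 2*M+2 from by omega,
        show ((M+1:ℕ):ℚ) = (M:ℚ)+1 from by push_cast; ring]
    simp only [Nat.factorial_zero, Nat.cast_one, pow_zero, one_mul, mul_one]
    have fM : (Nat.factorial (M+1) : ℚ) ≠ 0 := fact_ne (M+1)
    set A := ∏ j ∈ Finset.range M, (x + 2*(j:ℚ) + 1) with hA
    set B := ∏ j ∈ Finset.range (M+1), (x - 2*(j:ℚ) - 1) with hB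
    field_simp
    ring
lemma shifted_nat (a : ℕ) (k : ℕ) :
    shifted ((a:ℚ)+1) k * (Nat.factorial a : ℚ) = (Nat.factorial (a+k) : ℚ) := by
  induction k with
  | zero => simp [shifted]
  | succ k IH =>
    rw [shifted, Finset.prod_range_succ, ← shifted]
    have : a + (k+1) = (a+k) + 1 := by omega
    rw [this, Nat.factorial_succ]
    push_cast
    nlinarith [IH]

theorem sum_eval_at_negative_integers (n e : ℕ) (hn : 1 ≤ n) (he : e ≤ n - 1) :
    ∑ i ∈ Finset.range n,
      ((-1 : ℚ)^(n - i - 1) / (2*(n:ℚ) - 2*(i:ℚ) - 1)) *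
        (shifted ((n:ℚ) - (e:ℚ) - (i:ℚ)) (2*i) / (Nat.factorial i : ℚ)^2)
    = (-1 : ℚ)^n * shifted (1/2 + (n:ℚ)) (n - e - 1) / (2 * shifted (1/2 - (n:ℚ)) (n - e)) := by
  obtain ⟨M, hn_eq⟩ : ∃ M, n = e + M + 1 := ⟨n - e - 1, by omega⟩
  have hx : ∀ j : ℕ, 2*(n:ℚ) - 2*(j:ℚ) - 1 ≠ 0 := by
    intro j h
    have h2 : ((2*n : ℕ):ℚ) = ((2*j+1:ℕ):ℚ) := by push_cast; linarith
    have h3 : 2*n = 2*j+1 := Nat.cast_inj.mp h2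
    omega
  -- reduce sum to range (M+1)
  have hsub : Finset.range (M+1) ⊆ Finset.range n := by
    apply Finset.range_subset_range.mpr; omega
  have hz : ∀ i ∈ Finset.range n, i ∉ Finset.range (M+1) →
      ((-1 : ℚ)^(n - i - 1) / (2*(n:ℚ) - 2*(i:ℚ) - 1)) *
        (shifted ((n:ℚ) - (e:ℚ) - (i:ℚ)) (2*i) / (Nat.factorial i : ℚ)^2) = 0 := by
    intro i hi hni
    have hMi : M + 1 ≤ i := by simpa using hni
    have hzero : shifted ((n:ℚ) - (e:ℚ) - (i:ℚ)) (2*i) = 0 := by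
      apply Finset.prod_eq_zero (i := i - (M+1)) (by simp; omega)
      have : ((i - (M+1) : ℕ) : ℚ) = (i:ℚ) - (M+1) := by
        push_cast [Nat.cast_sub (by omega : M+1 ≤ i)]; ring
      rw [this, hn_eq]
      push_cast
      ring
    rw [hzero]
    simp
  rw [← Finset.sum_subset hsub hz]
  -- rewrite each summand
  have hterm : ∀ i ∈ Finset.range (M+1),
      ((-1 : ℚ)^(n - i - 1) / (2*(n:ℚ) - 2*(i:ℚ) - 1)) *
        (shifted ((n:ℚ) - (e:ℚ) - (i:ℚ)) (2*i) / (Nat.factorial i : ℚ)^2)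
      = (-1:ℚ)^e * ((-1:ℚ)^(M-i) * (Nat.factorial (M+i) : ℚ) /
          ((Nat.factorial i : ℚ)^2 * (Nat.factorial (M-i) : ℚ) * (2*(n:ℚ) - 2*(i:ℚ) - 1))) := by
    intro i hi
    have hi' : i ≤ M := Nat.lt_succ_iff.mp (Finset.mem_range.mp hi)
    have ha : (n:ℚ) - (e:ℚ) - (i:ℚ) = ((M-i : ℕ):ℚ) + 1 := by
      rw [hn_eq]
      push_cast [Nat.cast_sub hi']
      ring
    have hsv : shifted ((n:ℚ) - (e:ℚ) - (i:ℚ)) (2*i) * (Nat.factorial (M-i) : ℚ)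
        = (Nat.factorial (M+i) : ℚ) := by
      rw [ha, shifted_nat (M-i) (2*i), show M-i+2*i = M+i from by omega]
    have hsign : n - i - 1 = e + (M - i) := by omega
    rw [hsign, pow_add, ← hsv]
    have d1 := hx i
    have f1 := fact_ne i
    have f2 := fact_ne (M-i)
    field_simp
  rw [Finset.sum_congr rfl hterm, ← Finset.mul_sum, key M (2*(n:ℚ)) hx]
  -- right-hand side
  rw [show n - e - 1 = M from by omega, show n - e = M + 1 from by omega]
  have hP : shifted (1/2 + (n:ℚ)) M * 2^M = ∏ j ∈ Finset.range M, (2*(n:ℚ) + 2*(j:ℚ) + 1) := by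
    rw [shifted]
    have hh : ∏ t ∈ Finset.range M, ((1/2 + (n:ℚ) + (t:ℚ)) * 2)
        = (∏ t ∈ Finset.range M, (1/2 + (n:ℚ) + (t:ℚ))) * 2^M := by
      rw [Finset.prod_mul_distrib, Finset.prod_const, Finset.card_range]
    rw [← hh]
    apply Finset.prod_congr rfl
    intro j _
    ring
  have hQ : shifted (1/2 - (n:ℚ)) (M+1) * (-2)^(M+1)
      = ∏ j ∈ Finset.range (M+1), (2*(n:ℚ) - 2*(j:ℚ) - 1) := by
    rw [shifted]
    have hh : ∏ t ∈ Finset.range (M+1), ((1/2 - (n:ℚ) + (t:ℚ)) * (-2))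
        = (∏ t ∈ Finset.range (M+1), (1/2 - (n:ℚ) + (t:ℚ))) * (-2)^(M+1) := by
      rw [Finset.prod_mul_distrib, Finset.prod_const, Finset.card_range]
    rw [← hh]
    apply Finset.prod_congr rfl
    intro j _
    ring
  have hQne : (∏ j ∈ Finset.range (M+1), (2*(n:ℚ) - 2*(j:ℚ) - 1)) ≠ 0 :=
    Finset.prod_ne_zero_iff.mpr (fun j _ => hx j)
  set P := ∏ j ∈ Finset.range M, (2*(n:ℚ) + 2*(j:ℚ) + 1) with hPdef
  set Q := ∏ j ∈ Finset.range (M+1), (2*(n:ℚ) - 2*(j:ℚ) - 1) with hQdef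
  have hsQ : shifted (1/2 - (n:ℚ)) (M+1) = Q / (-2)^(M+1) := by
    rw [← hQ]; field_simp
  have hsP : shifted (1/2 + (n:ℚ)) M = P / 2^M := by
    rw [← hP]; field_simp
  rw [hsQ, hsP, hn_eq]
  have h2M : (2:ℚ)^M ≠ 0 := by positivity
  have h2M1 : ((-2):ℚ)^(M+1) ≠ 0 := by
    apply pow_ne_zero; norm_num
  have hQQ : Q ≠ 0 := hQne
  rw [show e + M + 1 = (e + M) + 1 from rfl, pow_succ, pow_add, pow_succ]
  have hmm : (-1:ℚ)^M * (-1:ℚ)^M = 1 := by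
    rw [← pow_add, ← two_mul, pow_mul]; norm_num
  field_simp
  rw [show ((-2):ℚ)^M = (-1)^M * 2^M from by rw [neg_pow]]
  linear_combination (-(P*(2:ℚ)^M)) * hmm
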